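/- For x > 0, define φ(x) = 1 − (1/√(4πx)) ∫_ℝ tanh(u/2) e^{−(u−x)²/(4x)} du, and φ(x) = 1 for x ≤ 0. Then φ is continuous and strictly decreasing on [0,∞), with φ(0) = 1 and φ(x) → 0 as x → ∞. -/

import Mathlib

open Real MeasureTheory Filter

/-- The function φ of the mean-based Gaussian approximation (Approximation 1). -/
noncomputable def phiGA (x : ℝ) : ℝ :=
  if 0 < x then
    1 - (1 / Real.sqrt (4 * Real.pi * x)) *
      ∫ u : ℝ, Real.tanh (u / 2) * Real.exp (-(u - x) ^ 2 / (4 * x))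
  else 1

noncomputable def auxJ (x : ℝ) : ℝ :=
  ∫ v : ℝ, Real.exp (-v ^ 2) / Real.cosh (Real.sqrt x * v)

noncomputable def auxPsi (x : ℝ) : ℝ := Real.exp (-x / 4) / Real.sqrt Real.pi * auxJ x

lemma auxJ_integrable (x : ℝ) :
    Integrable (fun v : ℝ => Real.exp (-v ^ 2) / Real.cosh (Real.sqrt x * v)) := by
  have h : Integrable (fun v : ℝ => Real.exp (-1 * v ^ 2)) := integrable_exp_neg_mul_sq one_pos
  refine (h.mono ?_ ?_)
  · exact (Real.continuous_exp.comp (continuous_pow 2).neg |>.div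
      (Real.continuous_cosh.comp (continuous_const.mul continuous_id))
      (fun v => (Real.cosh_pos _).ne')).aestronglyMeasurable
  · filter_upwards with v
    rw [Real.norm_eq_abs, Real.norm_eq_abs, abs_of_nonneg (by positivity), abs_of_nonneg (by positivity)]
    rw [neg_one_mul]
    calc Real.exp (-v ^ 2) / Real.cosh (Real.sqrt x * v) ≤ Real.exp (-v ^ 2) / 1 :=
          div_le_div_of_nonneg_left (Real.exp_pos _).le one_pos (Real.one_le_cosh _)
      _ = Real.exp (-v ^ 2) := div_one _

lemma auxJ_cont : Continuous auxJ := by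
  rw [continuous_iff_continuousAt]
  intro x₀
  refine continuousAt_of_dominated (F := fun x v => Real.exp (-v ^ 2) / Real.cosh (Real.sqrt x * v))
    (bound := fun v => Real.exp (-v ^ 2)) ?_ ?_ ?_ ?_
  · filter_upwards with x
    exact (auxJ_integrable x).aestronglyMeasurable
  · filter_upwards with x
    filter_upwards with v
    rw [Real.norm_eq_abs, abs_of_nonneg (by positivity)]
    calc Real.exp (-v ^ 2) / Real.cosh (Real.sqrt x * v) ≤ Real.exp (-v ^ 2) / 1 :=
          div_le_div_of_nonneg_left (Real.exp_pos _).le one_pos (Real.one_le_cosh _)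
      _ = Real.exp (-v ^ 2) := div_one _
  · exact (integrable_exp_neg_mul_sq (b := 1) one_pos).congr
      (Eventually.of_forall fun v => by simp [neg_one_mul])
  · filter_upwards with v
    exact (Real.continuous_exp.continuousAt).comp_of_eq continuousAt_const rfl |>.div
      ((Real.continuous_cosh.continuousAt).comp
        ((Real.continuous_sqrt.continuousAt).mul continuousAt_const))
      (Real.cosh_pos _).ne'

lemma auxJ_nonpos {x : ℝ} (hx : x ≤ 0) : auxJ x = Real.sqrt Real.pi := by
  unfold auxJ
  have : Real.sqrt x = 0 := Real.sqrt_eq_zero_of_nonpos hx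
  simp only [this, zero_mul, Real.cosh_zero, div_one]
  have := integral_gaussian 1
  simpa [neg_one_mul] using this

lemma auxPsi_zero : auxPsi 0 = 1 := by
  unfold auxPsi
  rw [auxJ_nonpos le_rfl]
  rw [neg_zero, zero_div, Real.exp_zero, one_div, inv_mul_cancel₀]
  exact (Real.sqrt_ne_zero'.2 Real.pi_pos)

lemma auxPsi_cont : Continuous auxPsi :=
  ((Real.continuous_exp.comp (continuous_id.neg.div_const 4)).div_const _).mul auxJ_cont

lemma auxPsi_nonneg (x : ℝ) : 0 ≤ auxPsi x := by
  unfold auxPsi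
  have : 0 ≤ auxJ x := integral_nonneg fun v => by positivity
  positivity

lemma auxPsi_le (x : ℝ) : auxPsi x ≤ Real.exp (-x / 4) := by
  unfold auxPsi
  have hJ : auxJ x ≤ Real.sqrt Real.pi := by
    rw [← auxJ_nonpos (le_refl 0)]
    unfold auxJ
    refine integral_mono (auxJ_integrable x) (auxJ_integrable 0) fun v => ?_
    simp only [Real.sqrt_zero, zero_mul, Real.cosh_zero, div_one]
    calc Real.exp (-v ^ 2) / Real.cosh (Real.sqrt x * v) ≤ Real.exp (-v ^ 2) / 1 :=
          div_le_div_of_nonneg_left (Real.exp_pos _).le one_pos (Real.one_le_cosh _)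
      _ = Real.exp (-v ^ 2) := div_one _
  calc Real.exp (-x / 4) / Real.sqrt Real.pi * auxJ x
      ≤ Real.exp (-x / 4) / Real.sqrt Real.pi * Real.sqrt Real.pi := by
        refine mul_le_mul_of_nonneg_left hJ (by positivity)
    _ = Real.exp (-x / 4) := div_mul_cancel₀ _ (Real.sqrt_ne_zero'.2 Real.pi_pos)

lemma auxPsi_strictAnti : StrictAntiOn auxPsi (Set.Ici 0) := by
  intro x hx y hy hxy
  unfold auxPsi
  rw [div_mul_eq_mul_div, div_mul_eq_mul_div, div_lt_div_iff_of_pos_right (Real.sqrt_pos.2 Real.pi_pos)]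
  unfold auxJ
  rw [← smul_eq_mul, ← smul_eq_mul, ← integral_smul, ← integral_smul]
  have hint : ∀ z : ℝ, Integrable (fun v : ℝ =>
      Real.exp (-z / 4) • (Real.exp (-v ^ 2) / Real.cosh (Real.sqrt z * v))) :=
    fun z => ((auxJ_integrable z).smul (Real.exp (-z/4))).congr (Eventually.of_forall fun v => rfl)
  have hlt : ∀ v : ℝ,
      Real.exp (-y / 4) • (Real.exp (-v ^ 2) / Real.cosh (Real.sqrt y * v)) <
      Real.exp (-x / 4) • (Real.exp (-v ^ 2) / Real.cosh (Real.sqrt x * v)) := by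
    intro v
    simp only [smul_eq_mul]
    have h1 : Real.exp (-y / 4) < Real.exp (-x / 4) := by
      apply Real.exp_lt_exp.2; linarith
    have h2 : Real.exp (-v ^ 2) / Real.cosh (Real.sqrt y * v) ≤
        Real.exp (-v ^ 2) / Real.cosh (Real.sqrt x * v) := by
      apply div_le_div_of_nonneg_left (Real.exp_pos _).le (Real.cosh_pos _)
      rw [Real.cosh_le_cosh, abs_mul, abs_mul]
      apply mul_le_mul_of_nonneg_right _ (abs_nonneg v)
      rw [abs_of_nonneg (Real.sqrt_nonneg _), abs_of_nonneg (Real.sqrt_nonneg _)]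
      exact Real.sqrt_le_sqrt hxy.le
    calc Real.exp (-y / 4) * (Real.exp (-v ^ 2) / Real.cosh (Real.sqrt y * v))
        ≤ Real.exp (-y / 4) * (Real.exp (-v ^ 2) / Real.cosh (Real.sqrt x * v)) :=
          mul_le_mul_of_nonneg_left h2 (Real.exp_pos _).le
      _ < Real.exp (-x / 4) * (Real.exp (-v ^ 2) / Real.cosh (Real.sqrt x * v)) :=
          mul_lt_mul_of_pos_right h1 (by positivity)
  -- strict integral inequality
  have hdiff : 0 < ∫ v : ℝ, (Real.exp (-x / 4) • (Real.exp (-v ^ 2) / Real.cosh (Real.sqrt x * v))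
      - Real.exp (-y / 4) • (Real.exp (-v ^ 2) / Real.cosh (Real.sqrt y * v))) := by
    rw [integral_pos_iff_support_of_nonneg_ae
      (Eventually.of_forall fun v => sub_nonneg.2 (hlt v).le) ((hint x).sub (hint y))]
    have : Function.support (fun v : ℝ =>
        Real.exp (-x / 4) • (Real.exp (-v ^ 2) / Real.cosh (Real.sqrt x * v))
        - Real.exp (-y / 4) • (Real.exp (-v ^ 2) / Real.cosh (Real.sqrt y * v))) = Set.univ := by
      ext v; simp only [Function.mem_support, Set.mem_univ, iff_true]
      exact sub_ne_zero.2 (hlt v).ne'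
    rw [this]
    simp
  rw [integral_sub (hint x) (hint y)] at hdiff
  linarith


lemma abs_tanh_le_one (t : ℝ) : |Real.tanh t| ≤ 1 := by
  rw [Real.tanh_eq_sinh_div_cosh, abs_div, abs_of_pos (Real.cosh_pos t),
    div_le_one (Real.cosh_pos t), abs_le]
  constructor
  · nlinarith [Real.sinh_add_cosh t, Real.exp_pos t]
  · nlinarith [Real.cosh_sub_sinh t, Real.exp_pos (-t)]

lemma tanh_eq_one_sub (t : ℝ) : Real.tanh t = 1 - Real.exp (-t) / Real.cosh t := by
  rw [Real.tanh_eq_sinh_div_cosh, eq_sub_iff_add_eq, ← add_div, div_eq_one_iff_eq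
    (Real.cosh_pos t).ne']
  nlinarith [Real.cosh_sub_sinh t]



section
variable {x : ℝ} (hx : 0 < x)
include hx

lemma integrable_G : Integrable (fun u : ℝ => Real.exp (-(u - x) ^ 2 / (4 * x))) := by
  have hb : (0:ℝ) < (4 * x)⁻¹ := by positivity
  refine ((integrable_exp_neg_mul_sq hb).comp_sub_right x).congr
    (Eventually.of_forall fun u => ?_)
  dsimp only
  rw [Real.exp_eq_exp]
  ring

lemma integrable_K : Integrable (fun u : ℝ => Real.exp (-u ^ 2 / (4 * x)) / Real.cosh (u / 2)) := by
  have hb : (0:ℝ) < (4 * x)⁻¹ := by positivity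
  refine (integrable_exp_neg_mul_sq hb).mono ?_ (Eventually.of_forall fun u => ?_)
  · exact ((Real.continuous_exp.comp ((continuous_pow 2).neg.div_const _)).div
      (Real.continuous_cosh.comp (continuous_id.div_const 2))
      (fun u => (Real.cosh_pos _).ne')).aestronglyMeasurable
  · rw [Real.norm_eq_abs, Real.norm_eq_abs, abs_of_nonneg (by positivity),
      abs_of_nonneg (by positivity)]
    have he : Real.exp (-u ^ 2 / (4 * x)) = Real.exp (-(4*x)⁻¹ * u ^ 2) := by
      congr 1; ring
    rw [he]
    calc Real.exp (-(4*x)⁻¹ * u ^ 2) / Real.cosh (u/2) ≤ Real.exp (-(4*x)⁻¹ * u ^ 2) / 1 :=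
          div_le_div_of_nonneg_left (Real.exp_pos _).le one_pos (Real.one_le_cosh _)
      _ = Real.exp (-(4*x)⁻¹ * u ^ 2) := div_one _

lemma integral_G_eq : ∫ u : ℝ, Real.exp (-(u - x) ^ 2 / (4 * x)) = Real.sqrt (4 * Real.pi * x) := by
  have hb : (0:ℝ) < (4 * x)⁻¹ := by positivity
  have h1 : ∫ u : ℝ, Real.exp (-(u - x) ^ 2 / (4 * x))
      = ∫ u : ℝ, Real.exp (-(4*x)⁻¹ * (u - x) ^ 2) := by
    refine integral_congr_ae (Eventually.of_forall fun u => ?_)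
    dsimp only
    rw [Real.exp_eq_exp]
    ring
  rw [h1, integral_sub_right_eq_self (fun u : ℝ => Real.exp (-(4*x)⁻¹ * u ^ 2)) x,
    integral_gaussian]
  rw [show Real.pi / (4*x)⁻¹ = 4 * Real.pi * x by rw [division_def, inv_inv]; ring]

lemma integral_K_eq : ∫ u : ℝ, Real.exp (-u ^ 2 / (4 * x)) / Real.cosh (u / 2)
    = 2 * Real.sqrt x * auxJ x := by
  have hs : (0:ℝ) < Real.sqrt x := Real.sqrt_pos.2 hx
  have := Measure.integral_comp_mul_left
    (fun u : ℝ => Real.exp (-u ^ 2 / (4 * x)) / Real.cosh (u / 2)) (2 * Real.sqrt x)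
  have h2 : (∫ v : ℝ, Real.exp (-(2 * Real.sqrt x * v) ^ 2 / (4 * x)) /
      Real.cosh (2 * Real.sqrt x * v / 2)) = auxJ x := by
    refine integral_congr_ae (Eventually.of_forall fun v => ?_)
    dsimp only
    have hsq : (2 * Real.sqrt x * v) ^ 2 = 4 * x * v ^ 2 := by
      have : Real.sqrt x ^ 2 = x := Real.sq_sqrt hx.le
      nlinarith [this]
    have h3 : -(4 * x * v ^ 2) / (4 * x) = -v ^ 2 := by
      field_simp
    have h4 : 2 * Real.sqrt x * v / 2 = Real.sqrt x * v := by ring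
    rw [hsq, h3, h4]
  rw [h2, smul_eq_mul, abs_of_pos (by positivity : (0:ℝ) < (2 * Real.sqrt x)⁻¹)] at this
  rw [this, ← mul_assoc, mul_inv_cancel₀ (by positivity : (2 * Real.sqrt x) ≠ 0), one_mul]

lemma pointwise_id (u : ℝ) :
    Real.tanh (u / 2) * Real.exp (-(u - x) ^ 2 / (4 * x))
    = Real.exp (-(u - x) ^ 2 / (4 * x))
      - Real.exp (-x / 4) * (Real.exp (-u ^ 2 / (4 * x)) / Real.cosh (u / 2)) := by
  have hx0 : x ≠ 0 := hx.ne'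
  rw [tanh_eq_one_sub, sub_mul, one_mul]
  congr 1
  have key : Real.exp (-(u/2)) * Real.exp (-(u - x) ^ 2 / (4 * x))
      = Real.exp (-x/4) * Real.exp (-u ^ 2 / (4 * x)) := by
    rw [← Real.exp_add, ← Real.exp_add]
    congr 1
    field_simp
    ring
  rw [div_mul_eq_mul_div, key, mul_div_assoc]

lemma integral_tanh_eq :
    ∫ u : ℝ, Real.tanh (u / 2) * Real.exp (-(u - x) ^ 2 / (4 * x))
    = Real.sqrt (4 * Real.pi * x) - Real.exp (-x / 4) * (2 * Real.sqrt x * auxJ x) := by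
  have h1 : ∫ u : ℝ, Real.tanh (u / 2) * Real.exp (-(u - x) ^ 2 / (4 * x))
      = ∫ u : ℝ, (Real.exp (-(u - x) ^ 2 / (4 * x))
        - Real.exp (-x / 4) * (Real.exp (-u ^ 2 / (4 * x)) / Real.cosh (u / 2))) :=
    integral_congr_ae (Eventually.of_forall fun u => pointwise_id hx u)
  rw [h1, integral_sub (integrable_G hx) ((integrable_K hx).const_mul _),
    integral_const_mul, integral_G_eq hx, integral_K_eq hx]


end

lemma phi_eq_psi {x : ℝ} (hx : 0 < x) : phiGA x = auxPsi x := by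
  rw [phiGA, if_pos hx, integral_tanh_eq hx]
  unfold auxPsi
  have h4 : Real.sqrt (4 * Real.pi * x) = 2 * Real.sqrt Real.pi * Real.sqrt x := by
    rw [show (4:ℝ) * Real.pi * x = (2 * Real.sqrt Real.pi * Real.sqrt x) ^ 2 by
      rw [mul_pow, mul_pow, Real.sq_sqrt Real.pi_pos.le, Real.sq_sqrt hx.le]; ring,
      Real.sqrt_sq (by positivity)]
  have hπ : Real.sqrt Real.pi ≠ 0 := (Real.sqrt_pos.2 Real.pi_pos).ne'
  have hsx : Real.sqrt x ≠ 0 := (Real.sqrt_pos.2 hx).ne'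
  rw [h4]
  field_simp
  ring

lemma phi_eq_psi_Ici : Set.EqOn phiGA auxPsi (Set.Ici 0) := by
  intro x hx
  rcases eq_or_lt_of_le (Set.mem_Ici.1 hx) with h | h
  · rw [← h]
    rw [show phiGA 0 = 1 by rw [phiGA, if_neg (lt_irrefl 0)], auxPsi_zero]
  · exact phi_eq_psi h

theorem phiGA_properties :
    ContinuousOn phiGA (Set.Ici 0) ∧ StrictAntiOn phiGA (Set.Ici 0) ∧
      phiGA 0 = 1 ∧ Tendsto phiGA atTop (nhds 0) := by
  refine ⟨(auxPsi_cont.continuousOn).congr phi_eq_psi_Ici, ?_, ?_, ?_⟩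
  · intro x hx y hy hxy
    rw [phi_eq_psi_Ici hx, phi_eq_psi_Ici hy]
    exact auxPsi_strictAnti hx hy hxy
  · rw [phiGA, if_neg (lt_irrefl 0)]
  · have hexp : Tendsto (fun x : ℝ => Real.exp (-x / 4)) atTop (nhds 0) := by
      have h1 : Tendsto (fun x : ℝ => x / 4) atTop atTop :=
        tendsto_id.atTop_div_const (by norm_num)
      have := Real.tendsto_exp_neg_atTop_nhds_zero.comp h1
      refine this.congr fun x => ?_
      simp [Function.comp, neg_div]
    refine tendsto_of_tendsto_of_tendsto_of_le_of_le' tendsto_const_nhds hexp ?_ ?_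
    · filter_upwards [eventually_ge_atTop (0:ℝ)] with x hx
      rw [phi_eq_psi_Ici hx]
      exact auxPsi_nonneg x
    · filter_upwards [eventually_ge_atTop (0:ℝ)] with x hx
      rw [phi_eq_psi_Ici hx]
      exact auxPsi_le x
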